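/- Let f(x) = x(1-x). For ρ₋, ρ, ρ₊ ∈ [0,1], h > 0, τ > 0 with τ ≤ h, the Lax–Friedrichs update satisfies h·ρ + τ·(F₋ - F₊) ≤ h, where F₋, F₊ are as in the scheme with α = ν = 1. -/
import Mathlib

theorem lax_friedrichs_upper_bound (h τ ρm ρ ρp : ℝ)
    (hh : 0 < h) (hτ : 0 < τ) (hcfl : τ ≤ h)
    (hρm : ρm ∈ Set.Icc (0 : ℝ) 1) (hρ : ρ ∈ Set.Icc (0 : ℝ) 1)
    (hρp : ρp ∈ Set.Icc (0 : ℝ) 1) :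
    h * ρ + τ * (((ρm * (1 - ρm) + ρ * (1 - ρ)) / 2 - (ρ - ρm) / 2) -
      ((ρ * (1 - ρ) + ρp * (1 - ρp)) / 2 - (ρp - ρ) / 2)) ≤ h := by
  obtain ⟨h1, h2⟩ := hρm
  obtain ⟨h3, h4⟩ := hρ
  obtain ⟨h5, h6⟩ := hρp
  nlinarith [mul_nonneg (sub_nonneg.2 hcfl) (sub_nonneg.2 h4),
    mul_nonneg hτ.le (sq_nonneg (1 - ρm)),
    mul_nonneg hτ.le (mul_nonneg (sub_nonneg.2 h6) (by linarith : (0:ℝ) ≤ 1 + ρp))]
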